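/- arXiv:2502.05856 — 2 statements merged into one kernel-verified Lean document; each statement's English description precedes it below -/
import Mathlib

section
/- The subcomplex FC_N is closed under the three-dimensional intersection product: if u and v are basis triples each of which either has no infinitesimal component and at least one point component (a cell of dimension ≤ 2), or has exactly one infinitesimal component and two point components (an infinitesimal stick), then μ₃(u, v) ∈ FC_N. -/
/-- Basis elements of the one-dimensional enlarged complex of period `N`:
points `P a`, elemental sticks `S a` (the interval `[a, a+1]`), and
infinitesimal sticks `I a`. -/
inductive B (N : ℕ) : Type where
  | P : ZMod N → B N
  | S : ZMod N → B N
  | I : ZMod N → B N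
  deriving DecidableEq

/-- The enlarged one-dimensional chain complex: the free ℚ-vector space on `B N`. -/
abbrev EC (N : ℕ) : Type := B N →₀ ℚ

namespace B

variable {N : ℕ}

/-- Codimension: 1 for points, 0 for sticks and infinitesimal sticks. -/
def cod : B N → ℕ
  | P _ => 1
  | _ => 0

/-- Basis element viewed in `EC N`. -/
noncomputable def e (u : B N) : EC N := Finsupp.single u 1

/-- The transverse intersection product on basis elements. -/
noncomputable def muB : B N → B N → EC N
  | P _, P _ => 0
  | P a, S b => if b = a ∨ b = a - 1 then Finsupp.single (P a) (1/2) else 0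
  | S b, P a => if b = a ∨ b = a - 1 then Finsupp.single (P a) (1/2) else 0
  | P a, I b => if b = a then Finsupp.single (P a) (1/4) else 0
  | I b, P a => if b = a then Finsupp.single (P a) (1/4) else 0
  | S a, S b =>
      if b = a then
        Finsupp.single (I a) (-1) + Finsupp.single (S a) 1 + Finsupp.single (I (a+1)) (-1)
      else if b = a + 1 then Finsupp.single (I (a+1)) 1
      else if b = a - 1 then Finsupp.single (I a) 1
      else 0
  | S a, I b => if b = a ∨ b = a + 1 then Finsupp.single (I b) (1/2) else 0
  | I b, S a => if b = a ∨ b = a + 1 then Finsupp.single (I b) (1/2) else 0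
  | I a, I b => if b = a then Finsupp.single (I a) (1/4) else 0

/-- Boundary on basis elements: `∂ (S a) = P (a+1) - P a`, zero otherwise. -/
noncomputable def bdB : B N → EC N
  | S a => Finsupp.single (P (a+1)) 1 - Finsupp.single (P a) 1
  | _ => 0

/-- Augmentation on basis elements. -/
def epsB : B N → ℚ
  | P _ => 1
  | _ => 0

end B

/-- Bilinear extension of the basis product to `EC N`. -/
noncomputable def mu {N : ℕ} (x y : EC N) : EC N :=
  x.sum fun u cu => y.sum fun v cv => (cu * cv) • B.muB u v

/-- Linear extension of the boundary to `EC N`. -/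
noncomputable def bd {N : ℕ} (x : EC N) : EC N := x.sum fun u cu => cu • B.bdB u

/-- Augmentation `ε : EC N → ℚ`. -/
noncomputable def eps {N : ℕ} (x : EC N) : ℚ := x.sum fun u cu => cu * B.epsB u

/-- The augmentation pairing `⟨x, y⟩ = ε (μ x y)`. -/
noncomputable def pair {N : ℕ} (x y : EC N) : ℚ := eps (mu x y)

/-- The subcomplex `C_N` spanned by points and elemental sticks. -/
noncomputable def Csub (N : ℕ) : Submodule ℚ (EC N) :=
  Submodule.span ℚ
    (Set.range (fun a : ZMod N => Finsupp.single (B.P a) (1 : ℚ)) ∪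
     Set.range (fun a : ZMod N => Finsupp.single (B.S a) (1 : ℚ)))

/-- Basis triples for the three-dimensional complex. -/
abbrev B3 (N : ℕ) : Type := B N × B N × B N

/-- The enlarged three-dimensional chain complex: free ℚ-vector space on `B3 N`. -/
abbrev E3 (N : ℕ) : Type := B3 N →₀ ℚ

/-- Codimension of a basis triple. -/
def cod3 {N : ℕ} (u : B3 N) : ℕ := u.1.cod + u.2.1.cod + u.2.2.cod

/-- Basis triple viewed in `E3 N`. -/
noncomputable def e3 {N : ℕ} (u : B3 N) : E3 N := Finsupp.single u 1

/-- Trilinear map `EC N → EC N → EC N → E3 N`, `x ⊗ y ⊗ z`. -/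
noncomputable def t3 {N : ℕ} (x y z : EC N) : E3 N :=
  x.sum fun u₁ c₁ => y.sum fun u₂ c₂ => z.sum fun u₃ c₃ =>
    Finsupp.single (u₁, u₂, u₃) (c₁ * c₂ * c₃)

/-- The three-dimensional intersection product on basis triples, with Koszul sign. -/
noncomputable def mu3B {N : ℕ} (u v : B3 N) : E3 N :=
  ((-1 : ℚ) ^ (u.2.1.cod * v.1.cod + u.2.2.cod * v.1.cod + u.2.2.cod * v.2.1.cod)) •
    t3 (B.muB u.1 v.1) (B.muB u.2.1 v.2.1) (B.muB u.2.2 v.2.2)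

/-- Bilinear extension of the three-dimensional product to `E3 N`. -/
noncomputable def mu3 {N : ℕ} (x y : E3 N) : E3 N :=
  x.sum fun u cu => y.sum fun v cv => (cu * cv) • mu3B u v

/-- The three-dimensional boundary on basis triples. -/
noncomputable def bd3B {N : ℕ} (u : B3 N) : E3 N :=
  t3 (B.bdB u.1) (B.e u.2.1) (B.e u.2.2)
    + ((-1 : ℚ) ^ u.1.cod) • t3 (B.e u.1) (B.bdB u.2.1) (B.e u.2.2)
    + ((-1 : ℚ) ^ (u.1.cod + u.2.1.cod)) • t3 (B.e u.1) (B.e u.2.1) (B.bdB u.2.2)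

/-- Linear extension of the three-dimensional boundary to `E3 N`. -/
noncomputable def bd3 {N : ℕ} (x : E3 N) : E3 N := x.sum fun u cu => cu • bd3B u

/-- The three-dimensional augmentation `ε₃`. -/
noncomputable def eps3 {N : ℕ} (x : E3 N) : ℚ :=
  x.sum fun u cu => cu * (B.epsB u.1 * B.epsB u.2.1 * B.epsB u.2.2)

/-- The three-dimensional augmentation pairing. -/
noncomputable def pair3 {N : ℕ} (x y : E3 N) : ℚ := eps3 (mu3 x y)

/-- Is a basis element an infinitesimal stick? -/
def isI {N : ℕ} : B N → Bool
  | .I _ => true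
  | _ => false

/-- Is a basis element a point? -/
def isP {N : ℕ} : B N → Bool
  | .P _ => true
  | _ => false

/-- Number of infinitesimal components of a basis triple. -/
def nI {N : ℕ} (u : B3 N) : ℕ :=
  (if isI u.1 then 1 else 0) + (if isI u.2.1 then 1 else 0) + (if isI u.2.2 then 1 else 0)

/-- Number of point components of a basis triple. -/
def nP {N : ℕ} (u : B3 N) : ℕ :=
  (if isP u.1 then 1 else 0) + (if isP u.2.1 then 1 else 0) + (if isP u.2.2 then 1 else 0)

/-- Membership of a basis triple in the generating set of `FC_N`: either no infinitesimal
component and at least one point component, or exactly one infinitesimal component and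
two point components. -/
def inFC {N : ℕ} (u : B3 N) : Prop := (nI u = 0 ∧ 1 ≤ nP u) ∨ (nI u = 1 ∧ nP u = 2)

/-- The subcomplex `FC_N` of `E3 N`. -/
noncomputable def FCsub (N : ℕ) : Submodule ℚ (E3 N) :=
  Submodule.span ℚ {x : E3 N | ∃ u : B3 N, inFC u ∧ x = e3 u}

/-- A basis triple has no infinitesimal component. -/
def noInf {N : ℕ} (u : B3 N) : Prop := nI u = 0

/-- The three-dimensional cubical subcomplex `C3_N` of `E3 N`. -/
noncomputable def C3sub (N : ℕ) : Submodule ℚ (E3 N) :=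
  Submodule.span ℚ {x : E3 N | ∃ u : B3 N, noInf u ∧ x = e3 u}

/-! ### Auxiliary machinery for Statement 15 -/

/-- The "kind" of a basis element. -/
inductive Kd : Type where
  | p | s | i
  deriving DecidableEq

instance : Fintype Kd := ⟨⟨[Kd.p, Kd.s, Kd.i], by decide⟩, fun x => by cases x <;> decide⟩

/-- Kind of a basis element. -/
def B.kind {N : ℕ} : B N → Kd
  | .P _ => .p
  | .S _ => .s
  | .I _ => .i

/-- Admissible kind triples for the product `muB`. -/
def Rk : Kd → Kd → Kd → Bool
  | .p, .s, .p => true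
  | .s, .p, .p => true
  | .p, .i, .p => true
  | .i, .p, .p => true
  | .s, .s, .s => true
  | .s, .s, .i => true
  | .s, .i, .i => true
  | .i, .s, .i => true
  | .i, .i, .i => true
  | _, _, _ => false

/-- `inFC` at the level of kinds. -/
def inFCk (a b c : Kd) : Bool :=
  let ni := (if a = Kd.i then 1 else 0) + (if b = Kd.i then 1 else 0) +
    (if c = Kd.i then 1 else 0)
  let np := (if a = Kd.p then 1 else 0) + (if b = Kd.p then 1 else 0) +
    (if c = Kd.p then 1 else 0)
  (ni = 0 && 1 ≤ np) || (ni = 1 && np = 2)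

lemma inFC_iff_kinds {N : ℕ} (u : B3 N) :
    inFC u ↔ inFCk u.1.kind u.2.1.kind u.2.2.kind = true := by
  obtain ⟨u1, u2, u3⟩ := u
  rcases u1 with a|a|a <;> rcases u2 with b|b|b <;> rcases u3 with c|c|c <;>
    simp [inFC, inFCk, nI, nP, isI, isP, B.kind]

/-- Key combinatorial fact: the product respects `inFC` at the level of kinds. -/
lemma key_kinds : ∀ a1 a2 a3 b1 b2 b3 c1 c2 c3 : Kd,
    inFCk a1 a2 a3 = true → inFCk b1 b2 b3 = true →
    Rk a1 b1 c1 = true → Rk a2 b2 c2 = true → Rk a3 b3 c3 = true →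
    inFCk c1 c2 c3 = true := by decide

/-- The support of `muB x y` only contains elements of admissible kind. -/
lemma muB_kind {N : ℕ} {x y z : B N} (h : z ∈ (B.muB x y).support) :
    Rk x.kind y.kind z.kind = true := by
  rw [Finsupp.mem_support_iff] at h
  rcases x with a|a|a <;> rcases y with b|b|b <;> rcases z with c|c|c <;>
    simp_all [B.muB, B.kind, Rk, Finsupp.single_apply, Finsupp.add_apply] <;>
    split_ifs at h <;> simp_all [Finsupp.single_apply]

lemma t3_apply {N : ℕ} (x y z : EC N) (a b c : B N) :
    t3 x y z (a, b, c) = x a * y b * z c := by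
  classical
  simp only [t3, Finsupp.sum_apply, Finsupp.single_apply, Prod.mk.injEq]
  rw [Finsupp.sum]
  rw [Finset.sum_eq_single a]
  · rw [Finsupp.sum, Finset.sum_eq_single b]
    · rw [Finsupp.sum, Finset.sum_eq_single c]
      · simp
      · intro d _ hd; simp [hd]
      · intro hc; simp [Finsupp.notMem_support_iff.mp hc]
    · intro d _ hd
      rw [Finsupp.sum]
      apply Finset.sum_eq_zero
      intro e _; simp [hd]
    · intro hb
      rw [Finsupp.sum]
      apply Finset.sum_eq_zero
      intro e _
      simp [Finsupp.notMem_support_iff.mp hb]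
      try (intros; simp_all)
  · intro d _ hd
    rw [Finsupp.sum]
    apply Finset.sum_eq_zero
    intro e _
    rw [Finsupp.sum]
    apply Finset.sum_eq_zero
    intro f _
    simp [hd]
  · intro ha
    rw [Finsupp.sum]
    apply Finset.sum_eq_zero
    intro e _
    rw [Finsupp.sum]
    apply Finset.sum_eq_zero
    intro f _
    simp [Finsupp.notMem_support_iff.mp ha]
    try (intros; simp_all)

lemma t3_support {N : ℕ} {x y z : EC N} {w : B3 N} (h : w ∈ (t3 x y z).support) :
    w.1 ∈ x.support ∧ w.2.1 ∈ y.support ∧ w.2.2 ∈ z.support := by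
  obtain ⟨a, b, c⟩ := w
  rw [Finsupp.mem_support_iff, t3_apply] at h
  refine ⟨?_, ?_, ?_⟩ <;> rw [Finsupp.mem_support_iff] <;> intro h0 <;>
    simp [h0] at h

lemma mem_FCsub_of_support {N : ℕ} (w : E3 N) (h : ∀ z ∈ w.support, inFC z) :
    w ∈ FCsub N := by
  classical
  have hw : w = w.support.sum (fun z => (w z) • e3 z) := by
    conv_lhs => rw [← Finsupp.sum_single w]
    rw [Finsupp.sum]
    apply Finset.sum_congr rfl
    intro z _
    simp [e3, Finsupp.smul_single]
  rw [hw]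
  apply Submodule.sum_mem
  intro z hz
  exact Submodule.smul_mem _ _ (Submodule.subset_span ⟨z, h z hz, rfl⟩)

lemma mu3_e3 {N : ℕ} (u v : B3 N) : mu3 (e3 u) (e3 v) = mu3B u v := by
  simp [mu3, e3, Finsupp.sum_single_index]

/-- the subcomplex `FC_N` is closed under the three-dimensional
intersection product. -/
theorem FC_closed_under_mu3 (N : ℕ) (hN : 3 ≤ N) :
    ∀ u v : B3 N, inFC u → inFC v → mu3 (e3 u) (e3 v) ∈ FCsub N := by
  intro u v hu hv
  rw [mu3_e3]
  apply mem_FCsub_of_support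
  intro z hz
  have hz' : z ∈ (t3 (B.muB u.1 v.1) (B.muB u.2.1 v.2.1) (B.muB u.2.2 v.2.2)).support := by
    have := Finsupp.support_smul (b := ((-1 : ℚ) ^
      (u.2.1.cod * v.1.cod + u.2.2.cod * v.1.cod + u.2.2.cod * v.2.1.cod)))
      (g := t3 (B.muB u.1 v.1) (B.muB u.2.1 v.2.1) (B.muB u.2.2 v.2.2))
    exact this (by simpa [mu3B] using hz)
  obtain ⟨h1, h2, h3⟩ := t3_support hz'
  rw [inFC_iff_kinds] at hu hv ⊢
  exact key_kinds _ _ _ _ _ _ _ _ _ hu hv (muB_kind h1) (muB_kind h2) (muB_kind h3)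
end

section
/- On the subcomplex FC_N, the Leibniz product rule holds without reservation: for all basis triples u, v each of which either has no infinitesimal component and at least one point component, or has exactly one infinitesimal component and two point components, ∂₃(μ₃(u, v)) = μ₃(∂₃ u, v) + (−1)^(c(u)) μ₃(u, ∂₃ v). -/
section Aux
open Finsupp
variable {N : ℕ}

/-- Linear boundary. -/
noncomputable def bdL : EC N →ₗ[ℚ] EC N :=
  Finsupp.lsum ℚ fun a => LinearMap.toSpanSingleton ℚ _ (B.bdB a)

/-- Sign (parity of codimension) operator. -/
noncomputable def sg : EC N →ₗ[ℚ] EC N :=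
  Finsupp.lsum ℚ fun a => LinearMap.toSpanSingleton ℚ _ (((-1:ℚ)^a.cod) • Finsupp.single a 1)

/-- Bilinear product. -/
noncomputable def muL : EC N →ₗ[ℚ] EC N →ₗ[ℚ] EC N :=
  Finsupp.lsum ℚ fun a => LinearMap.toSpanSingleton ℚ _
    (Finsupp.lsum ℚ fun b => LinearMap.toSpanSingleton ℚ _ (B.muB a b))

/-- Trilinear tensor map. -/
noncomputable def tr : EC N →ₗ[ℚ] EC N →ₗ[ℚ] EC N →ₗ[ℚ] E3 N :=
  Finsupp.lsum ℚ fun a => LinearMap.toSpanSingleton ℚ _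
    (Finsupp.lsum ℚ fun b => LinearMap.toSpanSingleton ℚ _
      (Finsupp.lsum ℚ fun c => LinearMap.toSpanSingleton ℚ _ (Finsupp.single (a,b,c) (1:ℚ))))

/-- Bilinear 3d product. -/
noncomputable def m3 : E3 N →ₗ[ℚ] E3 N →ₗ[ℚ] E3 N :=
  Finsupp.lsum ℚ fun u => LinearMap.toSpanSingleton ℚ _
    (Finsupp.lsum ℚ fun v => LinearMap.toSpanSingleton ℚ _ (mu3B u v))

/-- Linear 3d boundary. -/
noncomputable def bd3L : E3 N →ₗ[ℚ] E3 N :=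
  Finsupp.lsum ℚ fun u => LinearMap.toSpanSingleton ℚ _ (bd3B u)

@[simp] lemma bdL_single (a : B N) (c : ℚ) : bdL (Finsupp.single a c) = c • B.bdB a := by
  simp [bdL]

@[simp] lemma muL_single_single (a b : B N) (c d : ℚ) :
    muL (Finsupp.single a c) (Finsupp.single b d) = (c * d) • B.muB a b := by
  simp [muL, mul_smul]

@[simp] lemma m3_single_single (u v : B3 N) (c d : ℚ) :
    m3 (Finsupp.single u c) (Finsupp.single v d) = (c * d) • mu3B u v := by
  simp [m3, mul_smul]

@[simp] lemma bd3L_single (u : B3 N) (c : ℚ) : bd3L (Finsupp.single u c) = c • bd3B u := by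
  simp [bd3L]

@[simp] lemma sg_single (a : B N) (c : ℚ) :
    sg (Finsupp.single a c) = ((-1:ℚ)^a.cod) • Finsupp.single a c := by
  simp only [sg, Finsupp.lsum_single, LinearMap.toSpanSingleton_apply,
    Finsupp.smul_single, smul_eq_mul, mul_one, smul_smul]
  rw [mul_comm]

@[simp] lemma tr_single (a b c : B N) (x y z : ℚ) :
    tr (Finsupp.single a x) (Finsupp.single b y) (Finsupp.single c z)
      = Finsupp.single (a,b,c) (x*y*z) := by
  simp only [tr, Finsupp.lsum_single, LinearMap.toSpanSingleton_apply, LinearMap.smul_apply,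
    Finsupp.smul_single, smul_eq_mul, mul_one, smul_smul]

end Aux
section Bridges
open Finsupp
variable {N : ℕ}

lemma bd3_eq (x : E3 N) : bd3 x = bd3L x := by
  rw [bd3, bd3L, Finsupp.lsum_apply]
  exact Finsupp.sum_congr fun u _ => rfl

lemma mu3_eq (x y : E3 N) : mu3 x y = m3 x y := by
  rw [mu3, m3, Finsupp.lsum_apply, LinearMap.finsupp_sum_apply]
  apply Finsupp.sum_congr
  intro u _
  rw [LinearMap.toSpanSingleton_apply, LinearMap.smul_apply, Finsupp.lsum_apply,
    Finsupp.smul_sum]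
  apply Finsupp.sum_congr
  intro v _
  rw [LinearMap.toSpanSingleton_apply, smul_smul]

lemma mu_eq (x y : EC N) : mu x y = muL x y := by
  rw [mu, muL, Finsupp.lsum_apply, LinearMap.finsupp_sum_apply]
  apply Finsupp.sum_congr
  intro u _
  rw [LinearMap.toSpanSingleton_apply, LinearMap.smul_apply, Finsupp.lsum_apply,
    Finsupp.smul_sum]
  apply Finsupp.sum_congr
  intro v _
  rw [LinearMap.toSpanSingleton_apply, smul_smul]

lemma t3_eq (x y z : EC N) : t3 x y z = tr x y z := by
  rw [t3, tr, Finsupp.lsum_apply, LinearMap.finsupp_sum_apply, LinearMap.finsupp_sum_apply]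
  apply Finsupp.sum_congr
  intro u _
  rw [LinearMap.toSpanSingleton_apply, LinearMap.smul_apply, LinearMap.smul_apply,
    Finsupp.lsum_apply, LinearMap.finsupp_sum_apply, Finsupp.smul_sum]
  apply Finsupp.sum_congr
  intro v _
  rw [LinearMap.toSpanSingleton_apply, LinearMap.smul_apply, Finsupp.lsum_apply,
    Finsupp.smul_sum, Finsupp.smul_sum]
  apply Finsupp.sum_congr
  intro w _
  rw [LinearMap.toSpanSingleton_apply, smul_smul, smul_smul, Finsupp.smul_single, smul_eq_mul,
    mul_one]

end Bridges
section SgLemmas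
open Finsupp
variable {N : ℕ}

lemma sg_pow_of (c : ℕ) (x : EC N) (r : ℚ) (h : sg x = r • x) :
    (sg ^ c) x = r ^ c • x := by
  induction c with
  | zero => simp
  | succ n ih =>
    rw [pow_succ, Module.End.mul_apply, h, map_smul, ih, smul_smul, pow_succ]
    ring_nf

lemma sg_e (a : B N) : sg (B.e a) = ((-1:ℚ)^a.cod) • B.e a := by
  rw [B.e]; exact sg_single a 1

lemma sg_bdB (a : B N) : sg (B.bdB a) = ((-1:ℚ)^(a.cod+1)) • B.bdB a := by
  cases a <;> simp [B.bdB, B.cod, map_sub, smul_sub]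

lemma sg_muB (a b : B N) : sg (B.muB a b) = ((-1:ℚ)^(a.cod+b.cod)) • B.muB a b := by
  cases a <;> cases b <;> simp [B.muB, B.cod] <;> split_ifs <;>
    simp [map_add, smul_add, B.cod]

end SgLemmas
section MainLemmas
open Finsupp
variable {N : ℕ}

@[simp] lemma tr_e (a b c : B N) : tr (B.e a) (B.e b) (B.e c) = Finsupp.single (a,b,c) (1:ℚ) := by
  simp [B.e]

@[simp] lemma bdL_e (a : B N) : bdL (B.e a) = B.bdB a := by simp [B.e]

@[simp] lemma muL_e_e (a b : B N) : muL (B.e a) (B.e b) = B.muB a b := by simp [B.e]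

@[simp] lemma sg_e' (a : B N) : sg (B.e a) = ((-1:ℚ)^a.cod) • B.e a := sg_e a

lemma lemA (x y z : EC N) :
    bd3L (tr x y z)
      = tr (bdL x) y z + tr (sg x) (bdL y) z + tr (sg x) (sg y) (bdL z) := by
  induction x using Finsupp.induction_linear with
  | zero => simp
  | add f g hf hg =>
    simp only [map_add, LinearMap.add_apply, hf, hg]; abel
  | single a xc =>
    induction y using Finsupp.induction_linear with
    | zero => simp
    | add f g hf hg =>
      simp only [map_add, LinearMap.add_apply, hf, hg]; abel
    | single b yc =>
      induction z using Finsupp.induction_linear with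
      | zero => simp
      | add f g hf hg =>
        simp only [map_add, LinearMap.add_apply, hf, hg]; abel
      | single c zc =>
        rw [show (Finsupp.single a xc : EC N) = xc • B.e a by simp [B.e, Finsupp.smul_single],
          show (Finsupp.single b yc : EC N) = yc • B.e b by simp [B.e, Finsupp.smul_single],
          show (Finsupp.single c zc : EC N) = zc • B.e c by simp [B.e, Finsupp.smul_single]]
        simp only [map_smul, LinearMap.smul_apply, tr_single, tr_e, bdL_e, bd3L_single,
          bd3B, t3_eq, sg_e, smul_add]
        module

end MainLemmas
section LemB
open Finsupp
variable {N : ℕ}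

lemma sg_pow_e (c : ℕ) (a : B N) :
    (sg ^ c) (B.e a) = ((-1:ℚ)^(a.cod * c)) • B.e a := by
  rw [sg_pow_of c _ _ (sg_e a), pow_mul]

lemma sg_pow_bdB (c : ℕ) (a : B N) :
    (sg ^ c) (B.bdB a) = ((-1:ℚ)^((a.cod+1) * c)) • B.bdB a := by
  rw [sg_pow_of c _ _ (sg_bdB a), pow_mul]

lemma lemB (x y z : EC N) (v1 v2 v3 : B N) :
    m3 (tr x y z) (e3 (v1, v2, v3))
      = tr (muL x (B.e v1)) (muL ((sg ^ v1.cod) y) (B.e v2))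
          (muL ((sg ^ (v1.cod + v2.cod)) z) (B.e v3)) := by
  induction x using Finsupp.induction_linear with
  | zero => simp
  | add f g hf hg => simp only [map_add, LinearMap.add_apply, hf, hg]
  | single a xc =>
    induction y using Finsupp.induction_linear with
    | zero => simp
    | add f g hf hg => simp only [map_add, LinearMap.add_apply, hf, hg]
    | single b yc =>
      induction z using Finsupp.induction_linear with
      | zero => simp
      | add f g hf hg => simp only [map_add, LinearMap.add_apply, hf, hg]
      | single c zc =>
        rw [show (Finsupp.single a xc : EC N) = xc • B.e a by simp [B.e, Finsupp.smul_single],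
          show (Finsupp.single b yc : EC N) = yc • B.e b by simp [B.e, Finsupp.smul_single],
          show (Finsupp.single c zc : EC N) = zc • B.e c by simp [B.e, Finsupp.smul_single]]
        simp only [map_smul, LinearMap.smul_apply, tr_e, e3, m3_single_single, mu3B,
          t3_eq, sg_pow_e, muL_e_e, cod3]
        module

lemma lemB' (u1 u2 u3 : B N) (x y z : EC N) :
    m3 (e3 (u1, u2, u3)) (tr x y z)
      = tr (muL (B.e u1) ((sg ^ (u2.cod + u3.cod)) x)) (muL (B.e u2) ((sg ^ u3.cod) y))
          (muL (B.e u3) z) := by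
  induction x using Finsupp.induction_linear with
  | zero => simp
  | add f g hf hg => simp only [map_add, LinearMap.add_apply, hf, hg]
  | single a xc =>
    induction y using Finsupp.induction_linear with
    | zero => simp
    | add f g hf hg => simp only [map_add, LinearMap.add_apply, hf, hg]
    | single b yc =>
      induction z using Finsupp.induction_linear with
      | zero => simp
      | add f g hf hg => simp only [map_add, LinearMap.add_apply, hf, hg]
      | single c zc =>
        rw [show (Finsupp.single a xc : EC N) = xc • B.e a by simp [B.e, Finsupp.smul_single],
          show (Finsupp.single b yc : EC N) = yc • B.e b by simp [B.e, Finsupp.smul_single],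
          show (Finsupp.single c zc : EC N) = zc • B.e c by simp [B.e, Finsupp.smul_single]]
        simp only [map_smul, LinearMap.smul_apply, tr_e, e3, m3_single_single, mu3B,
          t3_eq, sg_pow_e, muL_e_e, cod3]
        module

end LemB
section Slot
open Finsupp
variable {N : ℕ}

/-- The one-dimensional Leibniz rule for a pair of basis elements. -/
def SlotOK (a b : B N) : Prop :=
  bdL (B.muB a b) = muL (B.bdB a) (B.e b) + ((-1:ℚ)^a.cod) • muL (B.e a) (B.bdB b)

lemma muL_e_bdB_P (a : B N) (x : ZMod N) : muL (B.e a) (B.bdB (B.P x)) = 0 := by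
  simp [B.bdB]

lemma muL_bdB_P_e (a : B N) (x : ZMod N) : muL (B.bdB (B.P x)) (B.e a) = 0 := by
  simp [B.bdB]

lemma slotOK_PP (x y : ZMod N) : SlotOK (B.P x : B N) (B.P y) := by
  simp [SlotOK, B.muB, B.bdB]

lemma slotOK_PS (x y : ZMod N) : SlotOK (B.P x : B N) (B.S y) := by
  unfold SlotOK
  rw [show (B.muB (B.P x) (B.S y) : EC N)
      = if y = x ∨ y = x - 1 then Finsupp.single (B.P x) (1/2) else 0 from rfl]
  split_ifs <;>
    simp [B.bdB, B.e, map_sub, B.muB, B.cod]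

lemma slotOK_SP (x y : ZMod N) : SlotOK (B.S x : B N) (B.P y) := by
  unfold SlotOK
  rw [show (B.muB (B.S x) (B.P y) : EC N)
      = if x = y ∨ x = y - 1 then Finsupp.single (B.P y) (1/2) else 0 from rfl]
  split_ifs <;>
    simp [B.bdB, B.e, map_sub, B.muB, B.cod]

lemma slotOK_PI (x y : ZMod N) : SlotOK (B.P x : B N) (B.I y) := by
  unfold SlotOK
  rw [show (B.muB (B.P x) (B.I y) : EC N)
      = if y = x then Finsupp.single (B.P x) (1/4) else 0 from rfl]
  split_ifs <;> simp [B.bdB, B.e, map_sub, B.muB, B.cod]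

lemma slotOK_IP (x y : ZMod N) : SlotOK (B.I x : B N) (B.P y) := by
  unfold SlotOK
  rw [show (B.muB (B.I x) (B.P y) : EC N)
      = if x = y then Finsupp.single (B.P y) (1/4) else 0 from rfl]
  split_ifs <;> simp [B.bdB, B.e, map_sub, B.muB, B.cod]

lemma slotOK_II (x y : ZMod N) : SlotOK (B.I x : B N) (B.I y) := by
  unfold SlotOK
  rw [show (B.muB (B.I x) (B.I y) : EC N)
      = if y = x then Finsupp.single (B.I x) (1/4) else 0 from rfl]
  split_ifs <;> simp [B.bdB, B.e, map_sub, B.muB, B.cod]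

lemma slotOK_SS (h1 : (1 : ZMod N) ≠ 0) (h2 : (2 : ZMod N) ≠ 0) (x y : ZMod N) :
    SlotOK (B.S x : B N) (B.S y) := by
  unfold SlotOK
  have key : ∀ c : ZMod N, muL (B.e (B.S x) : EC N) (B.bdB (B.S c))
      = B.muB (B.S x) (B.P (c+1)) - B.muB (B.S x) (B.P c) := by
    intro c; simp [B.bdB, B.e, map_sub]
  have key2 : muL (B.bdB (B.S x) : EC N) (B.e (B.S y))
      = B.muB (B.P (x+1)) (B.S y) - B.muB (B.P x) (B.S y) := by
    simp [B.bdB, B.e, map_sub]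
  rw [key, key2]
  by_cases hyx : y = x
  · subst hyx
    rw [show (B.muB (B.S y) (B.S y) : EC N) = Finsupp.single (B.I y) (-1)
        + Finsupp.single (B.S y) 1 + Finsupp.single (B.I (y+1)) (-1) by simp [B.muB]]
    have c1 : (B.muB (B.P (y+1)) (B.S y) : EC N) = Finsupp.single (B.P (y+1)) (1/2) := by
      simp [B.muB]
    have c2 : (B.muB (B.P y) (B.S y) : EC N) = Finsupp.single (B.P y) (1/2) := by
      simp [B.muB]
    have c3 : (B.muB (B.S y) (B.P (y+1)) : EC N) = Finsupp.single (B.P (y+1)) (1/2) := by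
      simp [B.muB]
    have c4 : (B.muB (B.S y) (B.P y) : EC N) = Finsupp.single (B.P y) (1/2) := by
      simp [B.muB]
    rw [c1, c2, c3, c4]
    simp [B.bdB, B.cod, map_add]
    ext w
    simp [Finsupp.single_apply]
    split_ifs <;> norm_num
  · by_cases hyx1 : y = x + 1
    · subst hyx1
      have n1 : x + 1 ≠ x := fun h => h1 (by linear_combination h)
      have n2 : (x+1 : ZMod N) ≠ x - 1 := fun h => h2 (by linear_combination h)
      have n3 : x ≠ x + 2 := fun h => h2 (by linear_combination - h)
      have n4 : x ≠ x + 1 := fun h => h1 (by linear_combination - h)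
      rw [show (B.muB (B.S x) (B.S (x+1)) : EC N) = Finsupp.single (B.I (x+1)) 1 by
        simp [B.muB, n1, n2]]
      have c1 : (B.muB (B.P (x+1)) (B.S (x+1)) : EC N)
          = Finsupp.single (B.P (x+1)) (1/2) := by simp [B.muB]
      have c2 : (B.muB (B.P x) (B.S (x+1)) : EC N) = 0 := by
        rw [show (B.muB (B.P x) (B.S (x+1)) : EC N)
          = if x+1 = x ∨ x+1 = x - 1 then Finsupp.single (B.P x) (1/2) else 0 from rfl]
        simp [n1, n2]
      have c3 : (B.muB (B.S x) (B.P (x+1+1)) : EC N) = 0 := by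
        rw [show (B.muB (B.S x) (B.P (x+1+1)) : EC N)
          = if x = x+1+1 ∨ x = (x+1+1) - 1 then Finsupp.single (B.P (x+1+1)) (1/2) else 0
          from rfl]
        have : x + 1 + 1 = x + 2 := by ring
        rw [this]
        have : (x + 2 : ZMod N) - 1 = x + 1 := by ring
        rw [this]
        simp [n3, n4]
      have c4 : (B.muB (B.S x) (B.P (x+1)) : EC N) = Finsupp.single (B.P (x+1)) (1/2) := by
        rw [show (B.muB (B.S x) (B.P (x+1)) : EC N)
          = if x = x+1 ∨ x = (x+1) - 1 then Finsupp.single (B.P (x+1)) (1/2) else 0 from rfl]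
        have : (x + 1 : ZMod N) - 1 = x := by ring
        rw [this]
        simp
      rw [c1, c2, c3, c4]
      simp [B.bdB, B.cod]
    · by_cases hyx2 : y = x - 1
      · subst hyx2
        have n1 : (x - 1 : ZMod N) ≠ x := fun h => h1 (by linear_combination - h)
        have n2 : (x - 1 : ZMod N) ≠ x + 1 := fun h => h2 (by linear_combination - h)
        have n3 : x ≠ x - 2 := fun h => h2 (by linear_combination h)
        have n4 : x ≠ x - 1 := fun h => h1 (by linear_combination h)
        rw [show (B.muB (B.S x) (B.S (x-1)) : EC N) = Finsupp.single (B.I x) 1 by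
          simp [B.muB, n1, n2]]
        have c1 : (B.muB (B.P (x+1)) (B.S (x-1)) : EC N) = 0 := by
          rw [show (B.muB (B.P (x+1)) (B.S (x-1)) : EC N)
            = if x-1 = x+1 ∨ x-1 = (x+1) - 1 then Finsupp.single (B.P (x+1)) (1/2) else 0
            from rfl]
          have e : (x + 1 : ZMod N) - 1 = x := by ring
          rw [e]
          simp [n1, n2]
        have c2 : (B.muB (B.P x) (B.S (x-1)) : EC N) = Finsupp.single (B.P x) (1/2) := by
          rw [show (B.muB (B.P x) (B.S (x-1)) : EC N)
            = if x-1 = x ∨ x-1 = x - 1 then Finsupp.single (B.P x) (1/2) else 0 from rfl]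
          simp
        have c3 : (B.muB (B.S x) (B.P (x-1+1)) : EC N) = Finsupp.single (B.P x) (1/2) := by
          have e : (x - 1 : ZMod N) + 1 = x := by ring
          rw [e, show (B.muB (B.S x) (B.P x) : EC N)
            = if x = x ∨ x = x - 1 then Finsupp.single (B.P x) (1/2) else 0 from rfl]
          simp
        have c4 : (B.muB (B.S x) (B.P (x-1)) : EC N) = 0 := by
          rw [show (B.muB (B.S x) (B.P (x-1)) : EC N)
            = if x = x-1 ∨ x = (x-1) - 1 then Finsupp.single (B.P (x-1)) (1/2) else 0
            from rfl]
          have e : (x - 1 : ZMod N) - 1 = x - 2 := by ring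
          rw [e]
          simp [n3, n4]
        rw [c1, c2, c3, c4]
        simp [B.bdB, B.cod]
      · have n1 : x ≠ y := fun h => hyx h.symm
        have n5 : x ≠ y + 1 := fun h => hyx2 (by linear_combination - h)
        have n6 : x ≠ y - 1 := fun h => hyx1 (by linear_combination - h)
        rw [show (B.muB (B.S x) (B.S y) : EC N) = 0 by simp [B.muB, hyx, hyx1, hyx2]]
        have c1 : (B.muB (B.P (x+1)) (B.S y) : EC N) = 0 := by
          rw [show (B.muB (B.P (x+1)) (B.S y) : EC N)
            = if y = x+1 ∨ y = (x+1) - 1 then Finsupp.single (B.P (x+1)) (1/2) else 0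
            from rfl]
          have e : (x + 1 : ZMod N) - 1 = x := by ring
          rw [e]
          simp [hyx, hyx1]
        have c2 : (B.muB (B.P x) (B.S y) : EC N) = 0 := by
          rw [show (B.muB (B.P x) (B.S y) : EC N)
            = if y = x ∨ y = x - 1 then Finsupp.single (B.P x) (1/2) else 0 from rfl]
          simp [hyx, hyx2]
        have c3 : (B.muB (B.S x) (B.P (y+1)) : EC N) = 0 := by
          rw [show (B.muB (B.S x) (B.P (y+1)) : EC N)
            = if x = y+1 ∨ x = (y+1) - 1 then Finsupp.single (B.P (y+1)) (1/2) else 0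
            from rfl]
          have e : (y + 1 : ZMod N) - 1 = y := by ring
          rw [e]
          simp [n1, n5]
        have c4 : (B.muB (B.S x) (B.P y) : EC N) = 0 := by
          rw [show (B.muB (B.S x) (B.P y) : EC N)
            = if x = y ∨ x = y - 1 then Finsupp.single (B.P y) (1/2) else 0 from rfl]
          simp [n1, n6]
        rw [c1, c2, c3, c4]
        simp

end Slot
section Assembly
open Finsupp
variable {N : ℕ}

lemma cod_cases (a : B N) : a.cod = 0 ∨ a.cod = 1 := by
  cases a <;> simp [B.cod]

set_option maxHeartbeats 3000000 in
lemma assembly (u1 u2 u3 v1 v2 v3 : B N)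
    (h1 : SlotOK u1 v1 ∨ B.muB u2 v2 = 0 ∨ B.muB u3 v3 = 0)
    (h2 : SlotOK u2 v2 ∨ B.muB u1 v1 = 0 ∨ B.muB u3 v3 = 0)
    (h3 : SlotOK u3 v3 ∨ B.muB u1 v1 = 0 ∨ B.muB u2 v2 = 0) :
    bd3L (mu3B ((u1,u2,u3) : B3 N) (v1,v2,v3))
      = m3 (bd3B ((u1,u2,u3) : B3 N)) (e3 ((v1,v2,v3) : B3 N))
        + ((-1:ℚ) ^ cod3 ((u1,u2,u3) : B3 N)) •
            m3 (e3 ((u1,u2,u3) : B3 N)) (bd3B ((v1,v2,v3) : B3 N)) := by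
  have H1 : tr (bdL (B.muB u1 v1)) (B.muB u2 v2) (B.muB u3 v3)
      = tr (muL (B.bdB u1) (B.e v1)) (B.muB u2 v2) (B.muB u3 v3)
        + ((-1:ℚ)^u1.cod) • tr (muL (B.e u1) (B.bdB v1)) (B.muB u2 v2) (B.muB u3 v3) := by
    rcases h1 with h | h | h
    · rw [SlotOK] at h
      rw [h, map_add, LinearMap.add_apply, LinearMap.add_apply, map_smul,
        LinearMap.smul_apply, LinearMap.smul_apply]
    · simp [h]
    · simp [h]
  have H2 : tr (B.muB u1 v1) (bdL (B.muB u2 v2)) (B.muB u3 v3)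
      = tr (B.muB u1 v1) (muL (B.bdB u2) (B.e v2)) (B.muB u3 v3)
        + ((-1:ℚ)^u2.cod) • tr (B.muB u1 v1) (muL (B.e u2) (B.bdB v2)) (B.muB u3 v3) := by
    rcases h2 with h | h | h
    · rw [SlotOK] at h
      rw [h, map_add, LinearMap.add_apply, map_smul, LinearMap.smul_apply]
    · simp [h]
    · simp [h]
  have H3 : tr (B.muB u1 v1) (B.muB u2 v2) (bdL (B.muB u3 v3))
      = tr (B.muB u1 v1) (B.muB u2 v2) (muL (B.bdB u3) (B.e v3))
        + ((-1:ℚ)^u3.cod) • tr (B.muB u1 v1) (B.muB u2 v2) (muL (B.e u3) (B.bdB v3)) := by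
    rcases h3 with h | h | h
    · rw [SlotOK] at h
      rw [h, map_add, map_smul]
    · simp [h]
    · simp [h]
  rw [mu3B, bd3B, bd3B]
  simp only [t3_eq, map_smul, map_add, LinearMap.smul_apply, LinearMap.add_apply]
  rw [lemA]
  rw [sg_muB, sg_muB]
  simp only [map_smul, LinearMap.smul_apply]
  rw [lemB, lemB, lemB, lemB', lemB', lemB']
  simp only [sg_pow_e, sg_pow_bdB, map_smul, LinearMap.smul_apply, muL_e_e, cod3]
  rw [H1, H2, H3]
  simp only [smul_add]
  rcases cod_cases u1 with e1|e1 <;> rcases cod_cases u2 with e2|e2 <;>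
    rcases cod_cases u3 with eu3|eu3 <;> rcases cod_cases v1 with f1|f1 <;>
    rcases cod_cases v2 with f2|f2 <;> rcases cod_cases v3 with f3|f3 <;>
    simp only [e1, e2, eu3, f1, f2, f3] <;> module

end Assembly
section FCComb
open Finsupp
variable {N : ℕ}

lemma muB_PP (x y : ZMod N) : B.muB (B.P x : B N) (B.P y) = 0 := rfl

lemma inFC_I1 {a : ZMod N} {y z : B N} (h : inFC ((B.I a, y, z) : B3 N)) :
    (∃ b, y = B.P b) ∧ ∃ c, z = B.P c := by
  cases y <;> cases z <;> simp_all [inFC, nI, nP, isI, isP]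

lemma inFC_I2 {a : ZMod N} {y z : B N} (h : inFC ((y, B.I a, z) : B3 N)) :
    (∃ b, y = B.P b) ∧ ∃ c, z = B.P c := by
  cases y <;> cases z <;> simp_all [inFC, nI, nP, isI, isP]

lemma inFC_I3 {a : ZMod N} {y z : B N} (h : inFC ((y, z, B.I a) : B3 N)) :
    (∃ b, y = B.P b) ∧ ∃ c, z = B.P c := by
  cases y <;> cases z <;> simp_all [inFC, nI, nP, isI, isP]

lemma inFC_S1 {a : ZMod N} {y z : B N} (h : inFC ((B.S a, y, z) : B3 N)) :
    (∃ b, y = B.P b) ∨ ∃ c, z = B.P c := by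
  cases y <;> cases z <;> simp_all [inFC, nI, nP, isI, isP]

lemma inFC_S2 {a : ZMod N} {y z : B N} (h : inFC ((y, B.S a, z) : B3 N)) :
    (∃ b, y = B.P b) ∨ ∃ c, z = B.P c := by
  cases y <;> cases z <;> simp_all [inFC, nI, nP, isI, isP]

lemma inFC_S3 {a : ZMod N} {y z : B N} (h : inFC ((y, z, B.S a) : B3 N)) :
    (∃ b, y = B.P b) ∨ ∃ c, z = B.P c := by
  cases y <;> cases z <;> simp_all [inFC, nI, nP, isI, isP]

lemma slotOK_good (h1 : (1 : ZMod N) ≠ 0) (h2 : (2 : ZMod N) ≠ 0) (a b : B N)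
    (hbad : ∀ x y : ZMod N, ¬(a = B.S x ∧ b = B.I y) ∧ ¬(a = B.I x ∧ b = B.S y)) :
    SlotOK a b := by
  cases a with
  | P x =>
    cases b with
    | P y => exact slotOK_PP x y
    | S y => exact slotOK_PS x y
    | I y => exact slotOK_PI x y
  | S x =>
    cases b with
    | P y => exact slotOK_SP x y
    | S y => exact slotOK_SS h1 h2 x y
    | I y => exact absurd ⟨rfl, rfl⟩ (hbad x y).1
  | I x =>
    cases b with
    | P y => exact slotOK_IP x y
    | S y => exact absurd ⟨rfl, rfl⟩ (hbad x y).2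
    | I y => exact slotOK_II x y

end FCComb

theorem leibniz_on_FC' (N : ℕ) (hN : 3 ≤ N) :
    ∀ u v : B3 N, inFC u → inFC v →
      bd3 (mu3 (e3 u) (e3 v))
        = mu3 (bd3 (e3 u)) (e3 v) + ((-1 : ℚ) ^ cod3 u) • mu3 (e3 u) (bd3 (e3 v)) := by
  have hNZ : NeZero N := ⟨by omega⟩
  have h2 : (2 : ZMod N) ≠ 0 := by
    have : ((2 : ℕ) : ZMod N) ≠ 0 := by
      rw [Ne, ZMod.natCast_eq_zero_iff]
      intro hdvd
      have := Nat.le_of_dvd (by norm_num) hdvd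
      omega
    simpa using this
  have h1 : (1 : ZMod N) ≠ 0 := by
    have : ((1 : ℕ) : ZMod N) ≠ 0 := by
      rw [Ne, ZMod.natCast_eq_zero_iff]
      intro hdvd
      have := Nat.le_of_dvd (by norm_num) hdvd
      omega
    simpa using this
  rintro ⟨u1, u2, u3⟩ ⟨v1, v2, v3⟩ hu hv
  have H1 : SlotOK u1 v1 ∨ B.muB u2 v2 = 0 ∨ B.muB u3 v3 = 0 := by
    by_cases hb : (∃ x y : ZMod N, u1 = B.S x ∧ v1 = B.I y) ∨
        (∃ x y : ZMod N, u1 = B.I x ∧ v1 = B.S y)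
    · right
      rcases hb with ⟨x, y, hx, hy⟩ | ⟨x, y, hx, hy⟩
      · subst hx; subst hy
        obtain ⟨⟨b2, hb2⟩, ⟨b3, hb3⟩⟩ := inFC_I1 hv
        rcases inFC_S1 hu with ⟨c2, hc2⟩ | ⟨c3, hc3⟩
        · left; rw [hb2, hc2]; exact muB_PP c2 b2
        · right; rw [hb3, hc3]; exact muB_PP c3 b3
      · subst hx; subst hy
        obtain ⟨⟨b2, hb2⟩, ⟨b3, hb3⟩⟩ := inFC_I1 hu
        rcases inFC_S1 hv with ⟨c2, hc2⟩ | ⟨c3, hc3⟩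
        · left; rw [hb2, hc2]; exact muB_PP b2 c2
        · right; rw [hb3, hc3]; exact muB_PP b3 c3
    · left
      push_neg at hb
      exact slotOK_good h1 h2 u1 v1 fun x y =>
        ⟨fun ⟨ha, hbb⟩ => hb.1 x y ha hbb, fun ⟨ha, hbb⟩ => hb.2 x y ha hbb⟩
  have H2 : SlotOK u2 v2 ∨ B.muB u1 v1 = 0 ∨ B.muB u3 v3 = 0 := by
    by_cases hb : (∃ x y : ZMod N, u2 = B.S x ∧ v2 = B.I y) ∨
        (∃ x y : ZMod N, u2 = B.I x ∧ v2 = B.S y)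
    · right
      rcases hb with ⟨x, y, hx, hy⟩ | ⟨x, y, hx, hy⟩
      · subst hx; subst hy
        obtain ⟨⟨b2, hb2⟩, ⟨b3, hb3⟩⟩ := inFC_I2 hv
        rcases inFC_S2 hu with ⟨c2, hc2⟩ | ⟨c3, hc3⟩
        · left; rw [hb2, hc2]; exact muB_PP c2 b2
        · right; rw [hb3, hc3]; exact muB_PP c3 b3
      · subst hx; subst hy
        obtain ⟨⟨b2, hb2⟩, ⟨b3, hb3⟩⟩ := inFC_I2 hu
        rcases inFC_S2 hv with ⟨c2, hc2⟩ | ⟨c3, hc3⟩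
        · left; rw [hb2, hc2]; exact muB_PP b2 c2
        · right; rw [hb3, hc3]; exact muB_PP b3 c3
    · left
      push_neg at hb
      exact slotOK_good h1 h2 u2 v2 fun x y =>
        ⟨fun ⟨ha, hbb⟩ => hb.1 x y ha hbb, fun ⟨ha, hbb⟩ => hb.2 x y ha hbb⟩
  have H3 : SlotOK u3 v3 ∨ B.muB u1 v1 = 0 ∨ B.muB u2 v2 = 0 := by
    by_cases hb : (∃ x y : ZMod N, u3 = B.S x ∧ v3 = B.I y) ∨
        (∃ x y : ZMod N, u3 = B.I x ∧ v3 = B.S y)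
    · right
      rcases hb with ⟨x, y, hx, hy⟩ | ⟨x, y, hx, hy⟩
      · subst hx; subst hy
        obtain ⟨⟨b2, hb2⟩, ⟨b3, hb3⟩⟩ := inFC_I3 hv
        rcases inFC_S3 hu with ⟨c2, hc2⟩ | ⟨c3, hc3⟩
        · left; rw [hb2, hc2]; exact muB_PP c2 b2
        · right; rw [hb3, hc3]; exact muB_PP c3 b3
      · subst hx; subst hy
        obtain ⟨⟨b2, hb2⟩, ⟨b3, hb3⟩⟩ := inFC_I3 hu
        rcases inFC_S3 hv with ⟨c2, hc2⟩ | ⟨c3, hc3⟩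
        · left; rw [hb2, hc2]; exact muB_PP b2 c2
        · right; rw [hb3, hc3]; exact muB_PP b3 c3
    · left
      push_neg at hb
      exact slotOK_good h1 h2 u3 v3 fun x y =>
        ⟨fun ⟨ha, hbb⟩ => hb.1 x y ha hbb, fun ⟨ha, hbb⟩ => hb.2 x y ha hbb⟩
  rw [mu3_eq, bd3_eq, mu3_eq, mu3_eq, bd3_eq, bd3_eq]
  have he : ∀ w : B3 N, e3 w = Finsupp.single w (1:ℚ) := fun w => rfl
  rw [show m3 (e3 ((u1,u2,u3) : B3 N)) (e3 ((v1,v2,v3) : B3 N))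
      = mu3B ((u1,u2,u3) : B3 N) ((v1,v2,v3) : B3 N) by
    rw [he, he, m3_single_single]; simp]
  rw [show bd3L (e3 ((u1,u2,u3) : B3 N)) = bd3B ((u1,u2,u3) : B3 N) by
    rw [he, bd3L_single]; simp]
  rw [show bd3L (e3 ((v1,v2,v3) : B3 N)) = bd3B ((v1,v2,v3) : B3 N) by
    rw [he, bd3L_single]; simp]
  exact assembly u1 u2 u3 v1 v2 v3 H1 H2 H3

/-- on the subcomplex `FC_N` the Leibniz product rule holds without
reservation. -/
theorem leibniz_on_FC (N : ℕ) (hN : 3 ≤ N) :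
    ∀ u v : B3 N, inFC u → inFC v →
      bd3 (mu3 (e3 u) (e3 v))
        = mu3 (bd3 (e3 u)) (e3 v) + ((-1 : ℚ) ^ cod3 u) • mu3 (e3 u) (bd3 (e3 v)) := by
  exact leibniz_on_FC' N hN
end
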